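/- Let (X_i)_{i≥1} be i.i.d. random variables, let E be an event of the form that X_i lies in some fixed measurable set, with indicator variables of the event having success probability q ∈ [0,1], split into a joint event {X_i ∈ B ∩ C} with marginal event {X_i ∈ C}. Define O_n = ∑_{i=1}^n 1{X_i ∈ B ∩ C}, N_n = ∑_{i=1}^n 1{X_i ∈ C}, p = P(X_1 ∈ B | X_1 ∈ C) (assuming P(X_1 ∈ C) > 0), and for λ > 0 set φ(λ) = log(1 − p + e^λ p). Then the process W_n = exp(λ O_n − N_n φ(λ)), with W_0 = 1, is a martingale with respect to the filtration F_n = σ(X_1, …, X_n, 1{X_{n+1} ∈ C}); in particular E[W_n] = 1 for all n. -/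

import Mathlib

open MeasureTheory ProbabilityTheory

lemma ind_nonneg' {Ω : Type*} (s : Set Ω) (ω : Ω) :
    0 ≤ s.indicator (fun _ => (1 : ℝ)) ω :=
  Set.indicator_nonneg (fun _ _ => zero_le_one) ω

lemma ind_le_one' {Ω : Type*} (s : Set Ω) (ω : Ω) :
    s.indicator (fun _ => (1 : ℝ)) ω ≤ 1 := by
  classical
  by_cases h : ω ∈ s <;> simp [Set.indicator_apply, h]

/-- Exponential martingale: let `(X_i)` be i.i.d., `B, C` measurable sets with
`P(X_0 ∈ C) > 0`, `p = P(X_0 ∈ B ∩ C)/P(X_0 ∈ C)`, `λ > 0`,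
`O_n = #{i < n : X_i ∈ B ∩ C}`, `N_n = #{i < n : X_i ∈ C}` and
`φ(λ) = log(1 − p + e^λ p)`. Then `W_n = exp(λ O_n − N_n φ(λ))` (with `W_0 = 1`)
is a martingale with respect to the filtration
`F_n = σ(X_0, …, X_{n−1}, 1{X_n ∈ C})`; in particular `E[W_n] = 1` for all `n`. -/
theorem exponential_count_martingale {Ω E : Type*} [mΩ : MeasurableSpace Ω]
    [mE : MeasurableSpace E]
    (μ : Measure Ω) [IsProbabilityMeasure μ]
    (X : ℕ → Ω → E) (hXmeas : ∀ i, Measurable (X i))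
    (hid : ∀ i, Measure.map (X i) μ = Measure.map (X 0) μ)
    (hindep : iIndepFun X μ)
    (B C : Set E) (hB : MeasurableSet B) (hC : MeasurableSet C)
    (hCpos : 0 < (μ (X 0 ⁻¹' C)).toReal)
    (p : ℝ) (hp : p = (μ (X 0 ⁻¹' (B ∩ C))).toReal / (μ (X 0 ⁻¹' C)).toReal)
    (lam : ℝ) (hlam : 0 < lam)
    (O N : ℕ → Ω → ℝ)
    (hO : ∀ n ω, O n ω =
      ∑ i ∈ Finset.range n, Set.indicator (X i ⁻¹' (B ∩ C)) (fun _ => (1 : ℝ)) ω)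
    (hN : ∀ n ω, N n ω =
      ∑ i ∈ Finset.range n, Set.indicator (X i ⁻¹' C) (fun _ => (1 : ℝ)) ω)
    (W : ℕ → Ω → ℝ)
    (hW : ∀ n ω, W n ω =
      Real.exp (lam * O n ω - N n ω * Real.log (1 - p + Real.exp lam * p))) :
    (∀ ω, W 0 ω = 1) ∧
    ∃ ℱ : Filtration ℕ mΩ,
      (∀ n, ℱ n =
        (⨆ i ∈ Finset.range n, MeasurableSpace.comap (X i) mE) ⊔
          MeasurableSpace.generateFrom {X n ⁻¹' C}) ∧
      Martingale W ℱ μ ∧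
      ∀ n, ∫ ω, W n ω ∂μ = 1 := by
  classical
  -- basic constants
  have hp0 : 0 ≤ p := by
    rw [hp]; exact div_nonneg ENNReal.toReal_nonneg ENNReal.toReal_nonneg
  have hexp1 : (1 : ℝ) < Real.exp lam := by
    have := Real.add_one_le_exp lam; linarith
  have hcpos : 0 < 1 - p + Real.exp lam * p := by nlinarith
  set φ : ℝ := Real.log (1 - p + Real.exp lam * p) with hφdef
  have hexpφ : Real.exp φ = 1 - p + Real.exp lam * p := Real.exp_log hcpos
  have hCne : (μ (X 0 ⁻¹' C)).toReal ≠ 0 := ne_of_gt hCpos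
  have hkey : (μ (X 0 ⁻¹' (B ∩ C))).toReal = p * (μ (X 0 ⁻¹' C)).toReal := by
    rw [hp]; field_simp
  -- identical distribution on preimages
  have hmap : ∀ (i : ℕ) (S : Set E), MeasurableSet S → μ (X i ⁻¹' S) = μ (X 0 ⁻¹' S) := by
    intro i S hS
    rw [← Measure.map_apply (hXmeas i) hS, hid i, Measure.map_apply (hXmeas 0) hS]
  -- the filtration
  set G : ℕ → MeasurableSpace Ω :=
    fun n => ⨆ i ∈ Finset.range n, MeasurableSpace.comap (X i) mE with hGdef
  set F : ℕ → MeasurableSpace Ω :=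
    fun n => G n ⊔ MeasurableSpace.generateFrom {X n ⁻¹' C} with hFdef
  have hGle : ∀ n, G n ≤ mΩ := by
    intro n
    exact iSup₂_le fun i _ => (hXmeas i).comap_le
  have hFle : ∀ n, F n ≤ mΩ := by
    intro n
    refine sup_le (hGle n) (MeasurableSpace.generateFrom_le ?_)
    rintro s hs
    rw [Set.mem_singleton_iff] at hs
    subst hs
    exact (hXmeas n) hC
  have hcomap_le_G : ∀ i n, i < n → MeasurableSpace.comap (X i) mE ≤ G n := by
    intro i n hi
    exact le_iSup₂ (f := fun i _ => MeasurableSpace.comap (X i) mE) i (Finset.mem_range.mpr hi)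
  have hFmono : Monotone F := by
    intro n m hnm
    refine sup_le ?_ ?_
    · refine le_trans ?_ (le_sup_left : G m ≤ F m)
      exact iSup₂_le fun i hi =>
        le_iSup₂ (f := fun i _ => MeasurableSpace.comap (X i) mE) i (Finset.mem_range.mpr (lt_of_lt_of_le (Finset.mem_range.mp hi) hnm))
    · rcases eq_or_lt_of_le hnm with rfl | h
      · exact le_sup_right
      · refine le_trans ?_ (le_trans (hcomap_le_G n m h) (le_sup_left : G m ≤ F m))
        refine MeasurableSpace.generateFrom_le ?_
        rintro s hs
        rw [Set.mem_singleton_iff] at hs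
        subst hs
        exact ⟨C, hC, rfl⟩
  set ℱ : Filtration ℕ mΩ := ⟨F, hFmono, hFle⟩ with hℱdef
  -- measurability of sets with respect to F n
  have hmeasG : ∀ i n, i < n → ∀ (S : Set E), MeasurableSet S →
      MeasurableSet[F n] (X i ⁻¹' S) := by
    intro i n hi S hS
    exact (le_sup_left.trans_eq' rfl : G n ≤ F n) _ (hcomap_le_G i n hi _ ⟨S, hS, rfl⟩)
  -- measurability of O n, N n, W n w.r.t. F n
  have hOmeas : ∀ n, Measurable[F n] (O n) := by
    intro n
    have : O n = fun ω => ∑ i ∈ Finset.range n,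
        Set.indicator (X i ⁻¹' (B ∩ C)) (fun _ => (1 : ℝ)) ω := funext (hO n)
    rw [this]
    exact Finset.measurable_sum _ fun i hi =>
      measurable_const.indicator (hmeasG i n (Finset.mem_range.mp hi) _ (hB.inter hC))
  have hNmeas : ∀ n, Measurable[F n] (N n) := by
    intro n
    have : N n = fun ω => ∑ i ∈ Finset.range n,
        Set.indicator (X i ⁻¹' C) (fun _ => (1 : ℝ)) ω := funext (hN n)
    rw [this]
    exact Finset.measurable_sum _ fun i hi =>
      measurable_const.indicator (hmeasG i n (Finset.mem_range.mp hi) _ hC)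
  have hWmeas : ∀ n, StronglyMeasurable[F n] (W n) := by
    intro n
    have : W n = fun ω => Real.exp (lam * O n ω - N n ω * φ) := funext (hW n)
    rw [this]
    exact (Real.measurable_exp.comp
      (((measurable_const.mul (hOmeas n)).sub ((hNmeas n).mul measurable_const)))).stronglyMeasurable
  -- bounds
  have hObd : ∀ n ω, 0 ≤ O n ω ∧ O n ω ≤ n := by
    intro n ω
    rw [hO n ω]
    constructor
    · exact Finset.sum_nonneg fun i _ => ind_nonneg' _ ω
    · calc ∑ i ∈ Finset.range n, Set.indicator (X i ⁻¹' (B ∩ C)) (fun _ => (1 : ℝ)) ω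
          ≤ ∑ _i ∈ Finset.range n, (1 : ℝ) :=
            Finset.sum_le_sum fun i _ => ind_le_one' _ ω
      _ = n := by simp
  have hNbd : ∀ n ω, 0 ≤ N n ω ∧ N n ω ≤ n := by
    intro n ω
    rw [hN n ω]
    constructor
    · exact Finset.sum_nonneg fun i _ => ind_nonneg' _ ω
    · calc ∑ i ∈ Finset.range n, Set.indicator (X i ⁻¹' C) (fun _ => (1 : ℝ)) ω
          ≤ ∑ _i ∈ Finset.range n, (1 : ℝ) :=
            Finset.sum_le_sum fun i _ => ind_le_one' _ ω
      _ = n := by simp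
  have hWbd : ∀ n ω, ‖W n ω‖ ≤ Real.exp (n * lam + n * |φ|) := by
    intro n ω
    rw [hW n ω, Real.norm_eq_abs, abs_of_pos (Real.exp_pos _)]
    refine Real.exp_le_exp.mpr ?_
    obtain ⟨hO0, hOn⟩ := hObd n ω
    obtain ⟨hN0, hNn⟩ := hNbd n ω
    have h1 : lam * O n ω ≤ lam * n := mul_le_mul_of_nonneg_left hOn hlam.le
    have h2 : -(N n ω * φ) ≤ N n ω * |φ| := by
      rw [← mul_neg]
      exact mul_le_mul_of_nonneg_left (neg_le_abs φ) hN0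
    have h3 : N n ω * |φ| ≤ n * |φ| := mul_le_mul_of_nonneg_right hNn (abs_nonneg φ)
    nlinarith
  have hWint : ∀ n, Integrable (W n) μ := by
    intro n
    exact (MeasureTheory.MemLp.of_bound
      (((hWmeas n).mono (hFle n)).aestronglyMeasurable) _
      (Filter.Eventually.of_forall (hWbd n))).integrable le_rfl
  -- the increment function
  have hZ : ∀ n : ℕ, ∃ Z : Ω → ℝ,
      (Z = fun ω => Set.indicator (X n ⁻¹' (B ∩ C)) (fun _ => (1 : ℝ)) ω
        - p * Set.indicator (X n ⁻¹' C) (fun _ => (1 : ℝ)) ω) := fun n => ⟨_, rfl⟩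
  -- step : conditional expectation property
  have hstep : ∀ n, W n =ᵐ[μ] μ[W (n + 1) | F n] := by
    intro n
    set T1 : Set Ω := X n ⁻¹' (B ∩ C) with hT1def
    set T2 : Set Ω := X n ⁻¹' C with hT2def
    have hT1m : MeasurableSet T1 := (hXmeas n) (hB.inter hC)
    have hT2m : MeasurableSet T2 := (hXmeas n) hC
    have hT1sub : T1 ⊆ T2 := fun ω h => h.2
    set Z : Ω → ℝ := fun ω => Set.indicator T1 (fun _ => (1 : ℝ)) ω
        - p * Set.indicator T2 (fun _ => (1 : ℝ)) ω with hZdef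
    have hZint : Integrable Z μ := by
      have h1 : Integrable (Set.indicator T1 (fun _ => (1 : ℝ))) μ :=
        (integrable_const (1 : ℝ)).indicator hT1m
      have h2 : Integrable (fun ω => p * Set.indicator T2 (fun _ => (1 : ℝ)) ω) μ :=
        ((integrable_const (1 : ℝ)).indicator hT2m).const_mul p
      exact h1.sub h2
    have hZmeas : Measurable Z := by
      have h1 : Measurable (Set.indicator T1 (fun _ => (1 : ℝ))) :=
        measurable_const.indicator hT1m
      have h2 : Measurable (fun ω => p * Set.indicator T2 (fun _ => (1 : ℝ)) ω) :=
        (measurable_const.indicator hT2m).const_mul p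
      exact h1.sub h2
    have hZbd : ∀ ω, ‖Z ω‖ ≤ 1 + p := by
      intro ω
      have hZω : Z ω = Set.indicator T1 (fun _ => (1 : ℝ)) ω
          - p * Set.indicator T2 (fun _ => (1 : ℝ)) ω := rfl
      rw [Real.norm_eq_abs, hZω, abs_le]
      constructor <;>
        nlinarith [ind_nonneg' T1 ω, ind_le_one' T1 ω, ind_nonneg' T2 ω, ind_le_one' T2 ω]
    have hTkey : (μ T1).toReal = p * (μ T2).toReal := by
      rw [hT1def, hT2def, hmap n _ (hB.inter hC), hmap n _ hC, hkey]
    -- set integral of Z over measurable sets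
    have hsetint : ∀ s : Set Ω, MeasurableSet s →
        ∫ ω in s, Z ω ∂μ = (μ (s ∩ T1)).toReal - p * (μ (s ∩ T2)).toReal := by
      intro s hs
      have h1 : ∫ ω in s, Set.indicator T1 (fun _ => (1 : ℝ)) ω ∂μ = (μ (s ∩ T1)).toReal := by
        rw [setIntegral_indicator hT1m, setIntegral_const, smul_eq_mul, mul_one, measureReal_def]
      have h2 : ∫ ω in s, Set.indicator T2 (fun _ => (1 : ℝ)) ω ∂μ = (μ (s ∩ T2)).toReal := by
        rw [setIntegral_indicator hT2m, setIntegral_const, smul_eq_mul, mul_one, measureReal_def]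
      rw [hZdef]
      rw [integral_sub (((integrable_const (1 : ℝ)).indicator hT1m).integrableOn)
        ((((integrable_const (1 : ℝ)).indicator hT2m).const_mul p).integrableOn),
        integral_const_mul, h1, h2]
    have htot : ∫ ω, Z ω ∂μ = 0 := by
      have := hsetint Set.univ MeasurableSet.univ
      rw [setIntegral_univ, Set.univ_inter, Set.univ_inter] at this
      rw [this, hTkey]
      ring
    -- independence
    have hIndep : Indep (G n) (MeasurableSpace.comap (X n) mE) μ := by
      have h := ProbabilityTheory.indep_iSup_of_disjoint
        (m := fun i => MeasurableSpace.comap (X i) mE) (fun i => (hXmeas i).comap_le) ((iIndepFun_iff_iIndep _ _ _).1 hindep)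
        (S := {i | i < n}) (T := {n})
        (by simp [Set.disjoint_singleton_right])
      have hS : (⨆ i ∈ {i | i < n}, MeasurableSpace.comap (X i) mE) = G n := by
        rw [hGdef]
        exact iSup_congr fun i => by rw [Set.mem_setOf_eq, ← Finset.mem_range]
      have hT : (⨆ i ∈ ({n} : Set ℕ), MeasurableSpace.comap (X i) mE)
          = MeasurableSpace.comap (X n) mE := by simp
      rwa [hS, hT] at h
    have hmul : ∀ A : Set Ω, MeasurableSet[G n] A → ∀ S : Set E, MeasurableSet S →
        μ (A ∩ X n ⁻¹' S) = μ A * μ (X n ⁻¹' S) := by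
      intro A hA S hS
      exact (hIndep.indepSet_of_measurableSet hA ⟨S, hS, rfl⟩).measure_inter_eq_mul
    have hzeroA : ∀ A : Set Ω, MeasurableSet[G n] A → ∫ ω in A, Z ω ∂μ = 0 := by
      intro A hA
      have hAm : MeasurableSet A := hGle n _ hA
      rw [hsetint A hAm, hT1def, hT2def, hmul A hA (B ∩ C) (hB.inter hC), hmul A hA C hC,
        ENNReal.toReal_mul, ENNReal.toReal_mul, ← hT1def, ← hT2def, hTkey]
      ring
    -- zero integral on all sets of F n, via the π-system of sets A ∩ D
    have hzero : ∀ s : Set Ω, MeasurableSet[F n] s → ∫ ω in s, Z ω ∂μ = 0 := by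
      have h_eq : F n = MeasurableSpace.generateFrom
          {t : Set Ω | ∃ A : Set Ω, MeasurableSet[G n] A ∧ (t = A ∨ t = A ∩ T2)} := by
        apply le_antisymm
        · refine sup_le ?_ ?_
          · intro s hs
            exact MeasurableSpace.measurableSet_generateFrom ⟨s, hs, Or.inl rfl⟩
          · refine MeasurableSpace.generateFrom_le ?_
            rintro s hs
            rw [Set.mem_singleton_iff] at hs
            subst hs
            exact MeasurableSpace.measurableSet_generateFrom
              ⟨Set.univ, MeasurableSet.univ, Or.inr (Set.univ_inter _).symm⟩
        · refine MeasurableSpace.generateFrom_le ?_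
          rintro t ⟨A, hA, (rfl | rfl)⟩
          · exact (le_sup_left : G n ≤ F n) _ hA
          · exact ((le_sup_left : G n ≤ F n) _ hA).inter
              ((le_sup_right : MeasurableSpace.generateFrom {T2} ≤ F n) _
                (MeasurableSpace.measurableSet_generateFrom (Set.mem_singleton _)))
      have h_pi : IsPiSystem
          {t : Set Ω | ∃ A : Set Ω, MeasurableSet[G n] A ∧ (t = A ∨ t = A ∩ T2)} := by
        rintro t1 ⟨A1, hA1, h1⟩ t2 ⟨A2, hA2, h2⟩ _
        refine ⟨A1 ∩ A2, hA1.inter hA2, ?_⟩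
        rcases h1 with rfl | rfl <;> rcases h2 with rfl | rfl
        · exact Or.inl rfl
        all_goals
          refine Or.inr ?_
          ext ω
          simp only [Set.mem_inter_iff]
          tauto
      intro s hs
      refine MeasurableSpace.induction_on_inter (m := F n)
        (C := fun s _ => ∫ ω in s, Z ω ∂μ = 0) h_eq h_pi ?_ ?_ ?_ ?_ s hs
      · simp
      · rintro t ⟨A, hA, h⟩
        have hAm : MeasurableSet A := hGle n _ hA
        have hA0 : ∫ ω in A, Z ω ∂μ = 0 := hzeroA A hA
        have heq2 : ∫ ω in A ∩ T2, Z ω ∂μ = ∫ ω in A, Z ω ∂μ := by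
          rw [hsetint _ (hAm.inter hT2m), hsetint _ hAm, Set.inter_assoc, Set.inter_assoc,
            Set.inter_eq_self_of_subset_right hT1sub, Set.inter_self]
        rcases h with h | h
        · rw [h]; exact hA0
        · rw [h, heq2]; exact hA0
      · intro t htm hct
        have hAm : MeasurableSet t := hFle n _ htm
        have h := integral_add_compl hAm hZint
        rw [hct, htot] at h
        show ∫ ω in tᶜ, Z ω ∂μ = 0
        linarith
      · intro f hdisj hfm hfz
        rw [integral_iUnion (fun i => hFle n _ (hfm i)) hdisj hZint.integrableOn]
        simp only [hfz]
        exact tsum_zero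
    -- conditional expectation of Z is zero
    have hcondZ : (0 : Ω → ℝ) =ᵐ[μ] μ[Z | F n] := by
      refine ae_eq_condExp_of_forall_setIntegral_eq (hFle n) hZint
        (fun s _ _ => (integrable_zero _ _ _).integrableOn) ?_ ?_
      · intro s hs _
        rw [hzero s hs]
        simp
      · exact (stronglyMeasurable_const (b := (0 : ℝ))).aestronglyMeasurable
    -- pointwise decomposition of W (n+1)
    set a : ℝ := (Real.exp lam - 1) / (1 - p + Real.exp lam * p) with hadef
    have hWsucc : ∀ ω, W (n + 1) ω = W n ω + a * (W n ω * Z ω) := by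
      intro ω
      have hOs : O (n + 1) ω = O n ω + Set.indicator T1 (fun _ => (1 : ℝ)) ω := by
        rw [hO (n + 1) ω, Finset.sum_range_succ, ← hO n ω]
      have hNs : N (n + 1) ω = N n ω + Set.indicator T2 (fun _ => (1 : ℝ)) ω := by
        rw [hN (n + 1) ω, Finset.sum_range_succ, ← hN n ω]
      rw [hW (n + 1) ω, hOs, hNs, hW n ω]
      have hsplit : lam * (O n ω + Set.indicator T1 (fun _ => (1 : ℝ)) ω)
          - (N n ω + Set.indicator T2 (fun _ => (1 : ℝ)) ω) * φ
          = (lam * O n ω - N n ω * φ)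
            + (lam * Set.indicator T1 (fun _ => (1 : ℝ)) ω
              - Set.indicator T2 (fun _ => (1 : ℝ)) ω * φ) := by ring
      rw [hsplit, Real.exp_add]
      have key : Real.exp (lam * Set.indicator T1 (fun _ => (1 : ℝ)) ω
          - Set.indicator T2 (fun _ => (1 : ℝ)) ω * φ) = 1 + a * Z ω := by
        rw [hZdef]
        by_cases h2 : ω ∈ T2
        · by_cases h1 : ω ∈ T1
          · simp only [Set.indicator_of_mem h1, Set.indicator_of_mem h2, mul_one, one_mul]
            rw [Real.exp_sub, hexpφ, hadef]
            field_simp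
            ring
          · simp only [Set.indicator_of_notMem h1, Set.indicator_of_mem h2, mul_zero, mul_one,
              one_mul, zero_sub]
            rw [Real.exp_neg, hexpφ, hadef]
            have hne : 1 - p + p * Real.exp lam ≠ 0 := by rw [mul_comm]; exact hcpos.ne'
            field_simp [hne, hcpos.ne']
            ring
        · have h1 : ω ∉ T1 := fun h => h2 (hT1sub h)
          simp only [Set.indicator_of_notMem h1, Set.indicator_of_notMem h2, mul_zero,
            zero_mul, sub_zero, mul_zero, sub_zero]
          simp
      rw [key]
      ring
    -- integrability of the product
    have hWZint : Integrable (fun ω => W n ω * Z ω) μ := by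
      refine (MeasureTheory.MemLp.of_bound
        ((((hWmeas n).mono (hFle n)).aestronglyMeasurable).mul hZmeas.aestronglyMeasurable)
        (Real.exp (n * lam + n * |φ|) * (1 + p)) ?_).integrable le_rfl
      refine Filter.Eventually.of_forall fun ω => ?_
      rw [Pi.mul_apply, norm_mul]
      exact mul_le_mul (hWbd n ω) (hZbd ω) (norm_nonneg _) (Real.exp_pos _).le
    -- assemble the conditional expectation computation
    have e1 : μ[W (n + 1) | F n] =ᵐ[μ] μ[(fun ω => W n ω + a * (W n ω * Z ω)) | F n] :=
      condExp_congr_ae (Filter.Eventually.of_forall hWsucc)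
    have e2 : μ[(fun ω => W n ω + a * (W n ω * Z ω)) | F n]
        =ᵐ[μ] μ[W n | F n] + μ[(fun ω => a * (W n ω * Z ω)) | F n] :=
      condExp_add (hWint n) (hWZint.const_mul a) (F n)
    have e3 : μ[(fun ω => a * (W n ω * Z ω)) | F n]
        =ᵐ[μ] fun ω => a * (μ[(fun ω => W n ω * Z ω) | F n]) ω := by
      have h := condExp_smul (μ := μ) (m := F n) a (fun ω => W n ω * Z ω)
      have h' : (a • fun ω => W n ω * Z ω) = fun ω => a * (W n ω * Z ω) := by
        funext ω; simp [smul_eq_mul]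
      rw [h'] at h
      refine h.trans (Filter.Eventually.of_forall fun ω => ?_)
      simp [smul_eq_mul]
    have e4 : μ[(fun ω => W n ω * Z ω) | F n] =ᵐ[μ] fun ω => W n ω * (μ[Z | F n]) ω := by
      have h := condExp_mul_of_stronglyMeasurable_left (μ := μ) (hWmeas n) (f := W n) (g := Z)
        hWZint hZint
      exact h
    have e5 : μ[W n | F n] = W n :=
      condExp_of_stronglyMeasurable (hFle n) (hWmeas n) (hWint n)
    filter_upwards [e1, e2, e3, e4, hcondZ] with ω h1 h2 h3 h4 h0
    rw [h1, h2, Pi.add_apply, e5, h3, h4, ← h0]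
    simp
  have hadp : StronglyAdapted ℱ W := fun n => hWmeas n
  have hmart : Martingale W ℱ μ := martingale_nat hadp hWint hstep
  have hW0 : ∀ ω, W 0 ω = 1 := by
    intro ω
    rw [hW 0 ω, hO 0 ω, hN 0 ω]
    simp
  refine ⟨hW0, ℱ, fun n => rfl, hmart, ?_⟩
  intro n
  have h0 : W 0 =ᵐ[μ] μ[W n | F 0] := (hmart.2 0 n (Nat.zero_le n)).symm
  calc ∫ ω, W n ω ∂μ = ∫ ω, (μ[W n | F 0]) ω ∂μ := (integral_condExp (hFle 0)).symm
    _ = ∫ ω, W 0 ω ∂μ := integral_congr_ae h0.symm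
    _ = 1 := by simp [hW0]
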